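/- Define graphs R_i recursively: R_0 is the empty graph, and R_i consists of a clique on vertices v_1,...,v_i together with i disjoint copies H_1,...,H_i of R_{floor((i-1)/2)}, with v_j adjacent to all vertices of H_j. Then the centered coloring number satisfies chi_cen(R_i) = i + chi_cen(R_{floor((i-1)/2)}). -/
import Mathlib


/-- A linear coloring: every path in `G` contains a vertex whose color appears
exactly once on the path. -/
def IsLinearColoring {V C : Type*} [DecidableEq C] (G : SimpleGraph V) (ψ : V → C) : Prop :=
  ∀ ⦃u v : V⦄ (p : G.Walk u v), p.IsPath →
    ∃ w ∈ p.support, (p.support.map ψ).count (ψ w) = 1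

/-- A centered coloring: every nonempty vertex set inducing a connected subgraph
contains a vertex whose color appears exactly once in the set. -/
def IsCenteredColoring {V C : Type*} [DecidableEq C] (G : SimpleGraph V) (φ : V → C) : Prop :=
  ∀ S : Finset V, S.Nonempty → (G.induce (S : Set V)).Connected →
    ∃ w ∈ S, (S.filter (fun x => φ x = φ w)).card = 1

/-- The linear coloring number: minimum number of colors of a linear coloring. -/
noncomputable def chiLin {V : Type*} (G : SimpleGraph V) : ℕ :=
  sInf {k | ∃ ψ : V → Fin k, IsLinearColoring G ψ}

/-- The centered coloring number: minimum number of colors of a centered coloring. -/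
noncomputable def chiCen {V : Type*} (G : SimpleGraph V) : ℕ :=
  sInf {k | ∃ φ : V → Fin k, IsCenteredColoring G φ}

/-- A treedepth decomposition of `G`: a rooted forest on the vertices of `G`,
given by its ancestor relation `anc` (a partial order whose down-sets are chains),
such that every edge of `G` joins an ancestor-descendant pair. -/
structure TreedepthDecomp {V : Type*} (G : SimpleGraph V) where
  anc : V → V → Prop
  refl : ∀ v, anc v v
  antisymm : ∀ u v, anc u v → anc v u → u = v
  trans : ∀ u v w, anc u v → anc v w → anc u w
  chain : ∀ u v w, anc u w → anc v w → anc u v ∨ anc v u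
  edge : ∀ u v, G.Adj u v → anc u v ∨ anc v u

/-- The decomposition has depth at most `k`: every ancestor-descendant chain has
at most `k` vertices. -/
def TreedepthDecomp.depthLE {V : Type*} {G : SimpleGraph V} (d : TreedepthDecomp G)
    (k : ℕ) : Prop :=
  ∀ s : Finset V, (∀ a ∈ s, ∀ b ∈ s, d.anc a b ∨ d.anc b a) → s.card ≤ k

/-- The treedepth of `G`: minimum depth of a treedepth decomposition. -/
noncomputable def treedepth {V : Type*} (G : SimpleGraph V) : ℕ :=
  sInf {k | ∃ d : TreedepthDecomp G, d.depthLE k}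

/-- The (asymmetric) edge relation of the recursive graph family `R_i`,
on vertices encoded as lists: the clique vertex `v_j` is `[j]`, and a vertex `w`
of the `j`-th copy `H_j` of `R_{⌊(i-1)/2⌋}` is encoded as `j :: w`. -/
def RRel : ℕ → List ℕ → List ℕ → Prop
  | 0 => fun _ _ => False
  | (i + 1) => fun x y =>
      (∃ a b, x = [a] ∧ y = [b] ∧ a ≠ b)
      ∨ (∃ j w, w ≠ [] ∧ x = [j] ∧ y = j :: w)
      ∨ (∃ j w w', RRel (i / 2) w w' ∧ x = j :: w ∧ y = j :: w')
termination_by i => i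
decreasing_by exact Nat.lt_succ_of_le (Nat.div_le_self i 2)

/-- The vertex set of `R_i` (as lists): `R_0` is empty, and `R_{i}` consists of
clique vertices `v_1, …, v_i` (encoded `[j]`, `j < i`) together with `i`
disjoint copies `H_1, …, H_i` of `R_{⌊(i-1)/2⌋}` (the `j`-th copy prefixed by `j`). -/
def RVset : ℕ → Set (List ℕ)
  | 0 => ∅
  | (i + 1) => {x | (∃ j, j < i + 1 ∧ x = [j]) ∨
      ∃ j w, j < i + 1 ∧ w ∈ RVset (i / 2) ∧ x = j :: w}
termination_by i => i
decreasing_by exact Nat.lt_succ_of_le (Nat.div_le_self i 2)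

/-- The recursive graph `R_i`: a clique on `v_1, …, v_i`, with `v_j` additionally
adjacent to every vertex of the `j`-th copy of `R_{⌊(i-1)/2⌋}`. -/
def RGraph (i : ℕ) : SimpleGraph (RVset i) :=
  (SimpleGraph.fromRel (RRel i)).induce (RVset i)

section Gen
variable {V V' C C' : Type*}

lemma centered_congr [DecidableEq C] [DecidableEq C'] {G : SimpleGraph V} {φ : V → C}
    (g : C → C') (hg : ∀ v w : V, g (φ v) = g (φ w) ↔ φ v = φ w)
    (h : IsCenteredColoring G φ) : IsCenteredColoring G (fun v => g (φ v)) := by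
  intro S hS hc
  obtain ⟨w, hw, hcard⟩ := h S hS hc
  refine ⟨w, hw, ?_⟩
  convert hcard using 2
  ext x
  simp [hg]

lemma centered_of_injective [DecidableEq C] {G : SimpleGraph V} {φ : V → C}
    (hφ : Function.Injective φ) : IsCenteredColoring G φ := by
  intro S hS _
  obtain ⟨w, hw⟩ := hS
  refine ⟨w, hw, ?_⟩
  rw [Finset.card_eq_one]
  refine ⟨w, ?_⟩
  ext x
  simp only [Finset.mem_filter, Finset.mem_singleton]
  constructor
  · rintro ⟨-, h⟩; exact hφ h
  · rintro rfl; exact ⟨hw, rfl⟩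

lemma chiCen_set_nonempty [Finite V] (G : SimpleGraph V) :
    {k | ∃ φ : V → Fin k, IsCenteredColoring G φ}.Nonempty := by
  classical
  haveI := Fintype.ofFinite V
  exact ⟨Fintype.card V, (Fintype.equivFin V : V → Fin _), centered_of_injective
    (Fintype.equivFin V).injective⟩

lemma chiCen_spec [Finite V] (G : SimpleGraph V) :
    ∃ φ : V → Fin (chiCen G), IsCenteredColoring G φ :=
  Nat.sInf_mem (chiCen_set_nonempty G)

lemma chiCen_le {G : SimpleGraph V} {k : ℕ} (φ : V → Fin k) (h : IsCenteredColoring G φ) :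
    chiCen G ≤ k :=
  Nat.sInf_le ⟨φ, h⟩

lemma chiCen_le_card_image [Fintype V] {G : SimpleGraph V} {k : ℕ} (φ : V → Fin k)
    (h : IsCenteredColoring G φ) :
    chiCen G ≤ (Finset.image φ Finset.univ).card := by
  classical
  set T := Finset.image φ Finset.univ with hT
  cases isEmpty_or_nonempty V with
  | inl hV =>
    have : chiCen G ≤ 0 := chiCen_le (fun v => (hV.false v).elim)
      (by intro S hS _; obtain ⟨w, _⟩ := hS; exact (hV.false w).elim)
    omega
  | inr hV =>
    have hTc : 0 < T.card := by
      obtain ⟨v⟩ := hV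
      exact Finset.card_pos.2 ⟨φ v, by simp [hT]⟩
    haveI : Nonempty (Fin T.card) := ⟨⟨0, hTc⟩⟩
    set g : Fin k → Fin T.card := fun c =>
      if hc : c ∈ T then T.equivFin ⟨c, hc⟩ else Classical.arbitrary _ with hg
    have hmem : ∀ v : V, φ v ∈ T := fun v => by simp [hT]
    have hginj : ∀ v w : V, g (φ v) = g (φ w) ↔ φ v = φ w := by
      intro v w
      simp only [hg, dif_pos (hmem v), dif_pos (hmem w)]
      rw [(T.equivFin).apply_eq_iff_eq]
      exact ⟨fun hh => congrArg Subtype.val hh, fun hh => Subtype.ext hh⟩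
    exact chiCen_le (fun v => g (φ v)) (centered_congr g hginj h)

/-- Induced-subgraph embedding: transfer of connectivity. -/
noncomputable def inducedIso {G : SimpleGraph V} {G' : SimpleGraph V'} (f : V' → V)
    (hinj : Function.Injective f) (hadj : ∀ a b, G'.Adj a b ↔ G.Adj (f a) (f b))
    (S' : Finset V') [DecidableEq V] :
    (G'.induce (S' : Set V')) ≃g (G.induce ((S'.image f : Finset V) : Set V)) := by
  refine ⟨Equiv.ofBijective (fun x => ⟨f x.1, by simp; exact ⟨x.1, x.2, rfl⟩⟩) ⟨?_, ?_⟩, ?_⟩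
  · intro a b hab
    exact Subtype.ext (hinj (congrArg Subtype.val hab))
  · rintro ⟨y, hy⟩
    simp only [Finset.coe_image, Set.mem_image, Finset.mem_coe] at hy
    obtain ⟨x, hx, rfl⟩ := hy
    exact ⟨⟨x, hx⟩, rfl⟩
  · intro a b
    simp only [Equiv.ofBijective_apply, SimpleGraph.comap_adj, Function.Embedding.coe_subtype]
    exact (hadj a.1 b.1).symm

lemma connected_image {G : SimpleGraph V} {G' : SimpleGraph V'} (f : V' → V)
    (hinj : Function.Injective f) (hadj : ∀ a b, G'.Adj a b ↔ G.Adj (f a) (f b))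
    (S' : Finset V') [DecidableEq V] :
    (G'.induce (S' : Set V')).Connected ↔
      (G.induce ((S'.image f : Finset V) : Set V)).Connected :=
  (inducedIso f hinj hadj S').connected_iff

lemma centered_comp [DecidableEq C] {G : SimpleGraph V} {G' : SimpleGraph V'} (f : V' → V)
    (hinj : Function.Injective f) (hadj : ∀ a b, G'.Adj a b ↔ G.Adj (f a) (f b))
    {φ : V → C} (hφ : IsCenteredColoring G φ) : IsCenteredColoring G' (fun v => φ (f v)) := by
  classical
  intro S' hS' hc'
  obtain ⟨w, hwmem, hw⟩ := hφ (S'.image f) (hS'.image f)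
    ((connected_image f hinj hadj S').1 hc')
  obtain ⟨w', hw', rfl⟩ := Finset.mem_image.1 hwmem
  refine ⟨w', hw', ?_⟩
  have hfilt : (S'.image f).filter (fun x => φ x = φ (f w')) = {f w'} := by
    rw [Finset.eq_singleton_iff_unique_mem]
    constructor
    · exact Finset.mem_filter.2 ⟨hwmem, rfl⟩
    · intro x hx
      have h1 := Finset.card_eq_one.1 hw
      obtain ⟨z, hz⟩ := h1
      have hxz : x ∈ ({z} : Finset V) := hz ▸ hx
      have hwz : f w' ∈ ({z} : Finset V) := hz ▸ Finset.mem_filter.2 ⟨hwmem, rfl⟩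
      simp only [Finset.mem_singleton] at hxz hwz
      rw [hxz, hwz]
  rw [Finset.card_eq_one]
  refine ⟨w', ?_⟩
  ext x
  simp only [Finset.mem_filter, Finset.mem_singleton]
  constructor
  · rintro ⟨hxS, hcol⟩
    have : f x ∈ (S'.image f).filter (fun y => φ y = φ (f w')) :=
      Finset.mem_filter.2 ⟨Finset.mem_image_of_mem f hxS, hcol⟩
    rw [hfilt, Finset.mem_singleton] at this
    exact hinj this
  · rintro rfl; exact ⟨hw', rfl⟩

lemma connected_of_reach (G : SimpleGraph V) (s : Set V) (x0 : V) (h0 : x0 ∈ s)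
    (h : ∀ x (hx : x ∈ s), (G.induce s).Reachable ⟨x, hx⟩ ⟨x0, h0⟩) :
    (G.induce s).Connected := by
  haveI : Nonempty s := ⟨⟨x0, h0⟩⟩
  exact ⟨fun a b => (h a.1 a.2).trans (h b.1 b.2).symm⟩

lemma induce_adj_of {G : SimpleGraph V} {s : Set V} {x y : V} (hx : x ∈ s) (hy : y ∈ s)
    (h : G.Adj x y) : (G.induce s).Adj ⟨x, hx⟩ ⟨y, hy⟩ := by
  simpa using h

lemma adj_color_ne [DecidableEq C] {G : SimpleGraph V} {φ : V → C}
    (hφ : IsCenteredColoring G φ) {u v : V} (h : G.Adj u v) : φ u ≠ φ v := by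
  classical
  intro heq
  have hne : u ≠ v := h.ne
  have hconn : (G.induce (({u, v} : Finset V) : Set V)).Connected := by
    apply connected_of_reach G _ u (by simp)
    intro x hx
    simp only [Finset.coe_insert, Set.mem_insert_iff, Finset.coe_singleton,
      Set.mem_singleton_iff] at hx
    rcases hx with rfl | rfl
    · rfl
    · exact (induce_adj_of (by simp) (by simp) h.symm).reachable
  obtain ⟨w, hwmem, hw⟩ := hφ {u, v} (by simp) hconn
  have hu : u ∈ ({u, v} : Finset V).filter (fun x => φ x = φ w) := by
    simp only [Finset.mem_filter, Finset.mem_insert, Finset.mem_singleton] at hwmem ⊢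
    rcases hwmem with rfl | rfl
    · simp
    · simp [heq]
  have hv : v ∈ ({u, v} : Finset V).filter (fun x => φ x = φ w) := by
    simp only [Finset.mem_filter, Finset.mem_insert, Finset.mem_singleton] at hwmem ⊢
    rcases hwmem with rfl | rfl
    · simp [heq]
    · simp
  have : ({u, v} : Finset V) ⊆ ({u, v} : Finset V).filter (fun x => φ x = φ w) := by
    intro x hx
    simp only [Finset.mem_insert, Finset.mem_singleton] at hx
    rcases hx with rfl | rfl
    · exact hu
    · exact hv
  have h2 := Finset.card_le_card this
  rw [Finset.card_pair hne] at h2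
  omega

end Gen

lemma rvset_zero : RVset 0 = ∅ := by rw [RVset]

lemma mem_rvset_succ {n : ℕ} {x : List ℕ} : x ∈ RVset (n + 1) ↔
    (∃ j, j < n + 1 ∧ x = [j]) ∨ ∃ j w, j < n + 1 ∧ w ∈ RVset (n / 2) ∧ x = j :: w := by
  rw [RVset]; rfl

lemma rrel_succ_iff {n : ℕ} {x y : List ℕ} : RRel (n + 1) x y ↔
    (∃ a b, x = [a] ∧ y = [b] ∧ a ≠ b)
      ∨ (∃ j w, w ≠ [] ∧ x = [j] ∧ y = j :: w)
      ∨ (∃ j w w', RRel (n / 2) w w' ∧ x = j :: w ∧ y = j :: w') := by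
  rw [RRel]

lemma rvset_ne_nil {i : ℕ} {x : List ℕ} (h : x ∈ RVset i) : x ≠ [] := by
  cases i with
  | zero => rw [rvset_zero] at h; exact absurd h (Set.notMem_empty x)
  | succ n =>
    rw [mem_rvset_succ] at h
    rcases h with ⟨j, _, rfl⟩ | ⟨j, w, _, _, rfl⟩ <;> simp

lemma rvset_finite : ∀ i, (RVset i).Finite := by
  intro i
  induction i using Nat.strong_induction_on with
  | _ i ih =>
    match i with
    | 0 => rw [rvset_zero]; exact Set.finite_empty
    | n + 1 =>
      have h := ih (n / 2) (Nat.lt_succ_of_le (Nat.div_le_self n 2))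
      apply Set.Finite.subset
        (((Set.finite_Iio (n+1)).image (fun j => [j])).union
          ((Set.finite_Iio (n+1)).biUnion (fun j _ => h.image (fun w => j :: w))))
      intro x hx
      rw [mem_rvset_succ] at hx
      rcases hx with ⟨j, hj, rfl⟩ | ⟨j, w, hj, hw, rfl⟩
      · exact Or.inl ⟨j, hj, rfl⟩
      · exact Or.inr (Set.mem_biUnion hj ⟨w, hw, rfl⟩)

instance rvsetFinite (i : ℕ) : Finite (RVset i) := (rvset_finite i).to_subtype

lemma rgraph_adj {i : ℕ} {a b : RVset i} :
    (RGraph i).Adj a b ↔ a.1 ≠ b.1 ∧ (RRel i a.1 b.1 ∨ RRel i b.1 a.1) := by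
  simp [RGraph, SimpleGraph.fromRel_adj]

section Rspec
variable {n : ℕ}

def vK (j : ℕ) (hj : j < n + 1) : RVset (n + 1) :=
  ⟨[j], mem_rvset_succ.2 (Or.inl ⟨j, hj, rfl⟩)⟩

def cpy (j : ℕ) (hj : j < n + 1) (w : RVset (n / 2)) : RVset (n + 1) :=
  ⟨j :: w.1, mem_rvset_succ.2 (Or.inr ⟨j, w.1, hj, w.2, rfl⟩)⟩

lemma cpy_injective (j : ℕ) (hj : j < n + 1) : Function.Injective (cpy j hj) := by
  intro a b hab
  have := congrArg Subtype.val hab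
  simp only [cpy, List.cons.injEq] at this
  exact Subtype.ext this.2

/-- Structure of adjacency in `RGraph (n+1)`. -/
lemma adj_structure {x y : List ℕ} (h : RRel (n + 1) x y ∨ RRel (n + 1) y x) :
    (∃ j k, x = [j] ∧ y = [k]) ∨ (∃ j w, w ≠ [] ∧ x = [j] ∧ y = j :: w)
      ∨ (∃ j w, w ≠ [] ∧ y = [j] ∧ x = j :: w)
      ∨ (∃ j w w', x = j :: w ∧ y = j :: w' ∧ (RRel (n / 2) w w' ∨ RRel (n / 2) w' w)) := by
  rcases h with h | h <;> rw [rrel_succ_iff] at h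
  · rcases h with ⟨a, b, rfl, rfl, _⟩ | ⟨j, w, hw, rfl, rfl⟩ | ⟨j, w, w', hr, rfl, rfl⟩
    · exact Or.inl ⟨a, b, rfl, rfl⟩
    · exact Or.inr (Or.inl ⟨j, w, hw, rfl, rfl⟩)
    · exact Or.inr (Or.inr (Or.inr ⟨j, w, w', rfl, rfl, Or.inl hr⟩))
  · rcases h with ⟨a, b, rfl, rfl, hab⟩ | ⟨j, w, hw, rfl, rfl⟩ | ⟨j, w, w', hr, rfl, rfl⟩
    · exact Or.inl ⟨b, a, rfl, rfl⟩
    · exact Or.inr (Or.inr (Or.inl ⟨j, w, hw, rfl, rfl⟩))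
    · exact Or.inr (Or.inr (Or.inr ⟨j, w', w, rfl, rfl, Or.inr hr⟩))

lemma adj_clique {j k : ℕ} (hj : j < n + 1) (hk : k < n + 1) (hne : j ≠ k) :
    (RGraph (n + 1)).Adj (vK j hj) (vK k hk) := by
  rw [rgraph_adj]
  refine ⟨by simp [vK, hne], Or.inl ?_⟩
  rw [rrel_succ_iff]
  exact Or.inl ⟨j, k, rfl, rfl, hne⟩

lemma adj_clique_cpy {j : ℕ} (hj : j < n + 1) (w : RVset (n / 2)) :
    (RGraph (n + 1)).Adj (vK j hj) (cpy j hj w) := by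
  rw [rgraph_adj]
  constructor
  · simp only [vK, cpy, ne_eq, List.cons.injEq]
    intro ⟨_, h⟩
    exact rvset_ne_nil w.2 h.symm
  · exact Or.inl (rrel_succ_iff.2 (Or.inr (Or.inl ⟨j, w.1, rvset_ne_nil w.2, rfl, rfl⟩)))

lemma adj_cpy_iff {j : ℕ} (hj : j < n + 1) (w w' : RVset (n / 2)) :
    (RGraph (n / 2)).Adj w w' ↔ (RGraph (n + 1)).Adj (cpy j hj w) (cpy j hj w') := by
  rw [rgraph_adj, rgraph_adj]
  have hwn : w.1 ≠ [] := rvset_ne_nil w.2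
  have hwn' : w'.1 ≠ [] := rvset_ne_nil w'.2
  constructor
  · rintro ⟨hne, hr⟩
    refine ⟨?_, ?_⟩
    · show j :: w.1 ≠ j :: w'.1
      intro h
      injection h with h1 h2
      exact hne h2
    · rcases hr with hr | hr
      · exact Or.inl (rrel_succ_iff.2 (Or.inr (Or.inr ⟨j, w.1, w'.1, hr, rfl, rfl⟩)))
      · exact Or.inr (rrel_succ_iff.2 (Or.inr (Or.inr ⟨j, w'.1, w.1, hr, rfl, rfl⟩)))
  · rintro ⟨hne, hr⟩
    have hne2 : (j :: w.1) ≠ (j :: w'.1) := hne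
    refine ⟨fun h => hne2 (by rw [h]), ?_⟩
    have hr2 : RRel (n + 1) (j :: w.1) (j :: w'.1) ∨ RRel (n + 1) (j :: w'.1) (j :: w.1) := hr
    rcases adj_structure hr2 with ⟨a, b, hx, hy⟩ | ⟨a, v, hv, hx, hy⟩ | ⟨a, v, hv, hy, hx⟩ |
        ⟨a, v, v', hx, hy, hvv⟩
    · injection hx with h1 h2; exact absurd h2 hwn
    · injection hx with h1 h2; exact absurd h2 hwn
    · injection hy with h1 h2; exact absurd h2 hwn'
    · injection hx with hx1 hx2
      injection hy with hy1 hy2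
      rw [hx2, hy2]
      exact hvv

/-- vertices of a fixed copy: adjacency forces equal heads. -/
lemma adj_same_head {x y : List ℕ} (hx : x.tail ≠ []) (hy : y.tail ≠ [])
    (h : RRel (n + 1) x y ∨ RRel (n + 1) y x) : x.headI = y.headI := by
  rcases adj_structure h with ⟨a, b, hx', hy'⟩ | ⟨a, v, hv, hx', hy'⟩ | ⟨a, v, hv, hy', hx'⟩ |
      ⟨a, v, v', hx', hy', _⟩
  · rw [hx'] at hx; exact absurd rfl hx
  · rw [hx'] at hx; exact absurd rfl hx
  · rw [hy'] at hy; exact absurd rfl hy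
  · rw [hx', hy']; rfl

end Rspec

section Walks
variable {n : ℕ}

lemma walk_head_const {S : Finset (RVset (n + 1))}
    (hS : ∀ x ∈ S, (x.1 : List ℕ).tail ≠ [])
    {a b : ↥((S : Set (RVset (n + 1))))}
    (p : ((RGraph (n + 1)).induce (S : Set (RVset (n + 1)))).Walk a b) :
    (a.1.1 : List ℕ).headI = (b.1.1 : List ℕ).headI := by
  induction p with
  | nil => rfl
  | @cons u v w h p ih =>
    refine Eq.trans ?_ ih
    have hadj : (RGraph (n + 1)).Adj u.1 v.1 := by
      simpa using h
    rw [rgraph_adj] at hadj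
    exact adj_same_head (hS u.1 u.2) (hS v.1 v.2) hadj.2

end Walks
lemma chiCen_upper (n : ℕ) :
    chiCen (RGraph (n + 1)) ≤ (n + 1) + chiCen (RGraph (n / 2)) := by
  classical
  obtain ⟨φ', hφ'⟩ := chiCen_spec (RGraph (n / 2))
  set f : RVset (n + 1) → Fin ((n + 1) + chiCen (RGraph (n / 2))) := fun x =>
    if h2 : (x.1 : List ℕ).tail = [] then
      ⟨min (x.1 : List ℕ).headI n, by have := Nat.min_le_right (x.1 : List ℕ).headI n; omega⟩
    else if h3 : (x.1 : List ℕ).tail ∈ RVset (n / 2) then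
      ⟨(n + 1) + (φ' ⟨(x.1 : List ℕ).tail, h3⟩).1, by
        have := (φ' ⟨(x.1 : List ℕ).tail, h3⟩).2; omega⟩
    else ⟨0, by omega⟩ with hf
  -- evaluation on clique vertices
  have hfK : ∀ (x : RVset (n + 1)) (j : ℕ), j < n + 1 → x.1 = [j] → (f x).1 = j := by
    intro x j hj hx
    have h2 : (x.1 : List ℕ).tail = [] := by rw [hx]; rfl
    simp only [hf, dif_pos h2, hx]
    show min ([j] : List ℕ).headI n = j
    simp only [List.headI]
    omega
  -- evaluation on copy vertices
  have hfC : ∀ (x : RVset (n + 1)) (j : ℕ) (w : List ℕ) (hw : w ∈ RVset (n / 2)),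
      x.1 = j :: w → (f x).1 = (n + 1) + (φ' ⟨w, hw⟩).1 := by
    intro x j w hw hx
    have h2 : (x.1 : List ℕ).tail ≠ [] := by rw [hx]; exact rvset_ne_nil hw
    have h3 : (x.1 : List ℕ).tail ∈ RVset (n / 2) := by rw [hx]; exact hw
    simp only [hf, dif_neg h2, dif_pos h3]
    have hsub : (⟨(x.1 : List ℕ).tail, h3⟩ : RVset (n / 2)) = ⟨w, hw⟩ := by
      apply Subtype.ext
      show (x.1 : List ℕ).tail = w
      simp [hx]
    rw [hsub]
  apply chiCen_le f
  intro S hS hconn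
  by_cases hA : ∃ x ∈ S, (x.1 : List ℕ).tail = []
  · -- S contains a clique vertex
    obtain ⟨x, hxS, hxt⟩ := hA
    obtain ⟨j, hj, hx1⟩ | ⟨j, w, hj, hw, hx1⟩ := mem_rvset_succ.1 x.2
    swap
    · exfalso; rw [hx1] at hxt; exact rvset_ne_nil hw hxt
    refine ⟨x, hxS, ?_⟩
    rw [Finset.card_eq_one]
    refine ⟨x, ?_⟩
    rw [Finset.eq_singleton_iff_unique_mem]
    refine ⟨Finset.mem_filter.2 ⟨hxS, rfl⟩, ?_⟩
    intro y hy
    obtain ⟨hyS, hyc⟩ := Finset.mem_filter.1 hy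
    have hfx : (f x).1 = j := hfK x j hj hx1
    obtain ⟨j', hj', hy1⟩ | ⟨j', w', hj', hw', hy1⟩ := mem_rvset_succ.1 y.2
    · have hfy : (f y).1 = j' := hfK y j' hj' hy1
      have : j' = j := by rw [← hfx, ← hfy, hyc]
      exact Subtype.ext (by rw [hy1, hx1, this])
    · have hfy : (f y).1 = (n + 1) + (φ' ⟨w', hw'⟩).1 := hfC y j' w' hw' hy1
      exfalso
      have : (f y).1 = (f x).1 := by rw [hyc]
      omega
  · -- S is inside one copy
    push_neg at hA
    obtain ⟨x0, hx0S⟩ := hS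
    obtain ⟨j, hj, hx01⟩ | ⟨j, w0, hj, hw0, hx01⟩ := mem_rvset_succ.1 x0.2
    · exfalso; exact hA x0 hx0S (by rw [hx01]; rfl)
    have hhead : ∀ x ∈ S, (x.1 : List ℕ).headI = j := by
      intro x hx
      obtain ⟨p⟩ := hconn.preconnected ⟨x, hx⟩ ⟨x0, hx0S⟩
      have := walk_head_const hA p
      rw [hx01] at this
      exact this
    haveI := Fintype.ofFinite (RVset (n / 2))
    set S' : Finset (RVset (n / 2)) :=
      Finset.univ.filter (fun w => cpy j hj w ∈ S) with hS'def
    have hmemS' : ∀ w : RVset (n / 2), w ∈ S' ↔ cpy j hj w ∈ S := by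
      intro w; simp [hS'def]
    have himg : S'.image (cpy j hj) = S := by
      ext y
      constructor
      · intro hy
        obtain ⟨w, hwS', rfl⟩ := Finset.mem_image.1 hy
        exact (hmemS' w).1 hwS'
      · intro hy
        obtain ⟨j', hj', hy1⟩ | ⟨j', w', hj', hw', hy1⟩ := mem_rvset_succ.1 y.2
        · exact absurd (by rw [hy1]; rfl) (hA y hy)
        · have hj'j : j' = j := by
            have := hhead y hy; rw [hy1] at this; exact this
          have hyeq : y = cpy j hj ⟨w', hw'⟩ := Subtype.ext (by rw [hy1, hj'j]; rfl)
          refine Finset.mem_image.2 ⟨⟨w', hw'⟩, (hmemS' _).2 ?_, hyeq.symm⟩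
          rw [← hyeq]; exact hy
    have hS'ne : S'.Nonempty := by
      refine ⟨⟨w0, hw0⟩, (hmemS' _).2 ?_⟩
      have : x0 = cpy j hj ⟨w0, hw0⟩ := Subtype.ext (by rw [hx01]; rfl)
      rw [← this]; exact hx0S
    have hconn' : ((RGraph (n / 2)).induce (S' : Set (RVset (n / 2)))).Connected := by
      rw [connected_image (cpy j hj) (cpy_injective j hj) (fun a b => adj_cpy_iff hj a b) S']
      rw [himg]
      exact hconn
    obtain ⟨w', hw'S', hw'card⟩ := hφ' S' hS'ne hconn'
    have hwmem : cpy j hj w' ∈ S := (hmemS' w').1 hw'S'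
    refine ⟨cpy j hj w', hwmem, ?_⟩
    rw [Finset.card_eq_one]
    refine ⟨cpy j hj w', ?_⟩
    rw [Finset.eq_singleton_iff_unique_mem]
    refine ⟨Finset.mem_filter.2 ⟨hwmem, rfl⟩, ?_⟩
    intro y hy
    obtain ⟨hyS, hyc⟩ := Finset.mem_filter.1 hy
    obtain ⟨wy, hwyS', rfl⟩ := Finset.mem_image.1 (himg ▸ hyS)
    have h1 : (f (cpy j hj wy)).1 = (n + 1) + (φ' wy).1 :=
      hfC _ j wy.1 wy.2 rfl
    have h2 : (f (cpy j hj w')).1 = (n + 1) + (φ' w').1 :=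
      hfC _ j w'.1 w'.2 rfl
    have hval : (φ' wy) = (φ' w') := by
      have : (f (cpy j hj wy)).1 = (f (cpy j hj w')).1 := by rw [hyc]
      rw [h1, h2] at this
      exact Fin.ext (by omega)
    have hwyfilt : wy ∈ S'.filter (fun x => φ' x = φ' w') :=
      Finset.mem_filter.2 ⟨hwyS', hval⟩
    have hw'filt : w' ∈ S'.filter (fun x => φ' x = φ' w') :=
      Finset.mem_filter.2 ⟨hw'S', rfl⟩
    rw [Finset.card_le_one.1 (le_of_eq hw'card) wy hwyfilt w' hw'filt]

lemma chiCen_lower (n : ℕ) :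
    (n + 1) + chiCen (RGraph (n / 2)) ≤ chiCen (RGraph (n + 1)) := by
  classical
  refine le_csInf (chiCen_set_nonempty _) ?_
  rintro k ⟨φ, hφ⟩
  -- clique colors are pairwise distinct
  have hclique : ∀ (j l : ℕ) (hj : j < n + 1) (hl : l < n + 1),
      φ (vK j hj) = φ (vK l hl) → j = l := by
    intro j l hj hl heq
    by_contra hne
    exact adj_color_ne hφ (adj_clique hj hl hne) heq
  set Kc : Finset (Fin k) := Finset.image (fun j : Fin (n + 1) => φ (vK j.1 j.2)) Finset.univ
    with hKc
  have hKcard : Kc.card = n + 1 := by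
    rw [hKc, Finset.card_image_of_injective _ ?_, Finset.card_univ, Fintype.card_fin]
    intro a b hab
    exact Fin.ext (hclique _ _ _ _ hab)
  have hkn : n + 1 ≤ k := by
    have h1 : Kc.card ≤ Fintype.card (Fin k) := Finset.card_le_univ Kc
    rw [hKcard, Fintype.card_fin] at h1
    exact h1
  rcases Nat.eq_zero_or_pos (chiCen (RGraph (n / 2))) with hc0 | hcpos
  · omega
  by_contra hlt
  push_neg at hlt
  haveI := Fintype.ofFinite (RVset (n / 2))
  -- each copy uses a clique color
  have key : ∀ j : Fin (n + 1), ∃ (u : RVset (n / 2)) (l : Fin (n + 1)),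
      φ (cpy j.1 j.2 u) = φ (vK l.1 l.2) := by
    intro j
    by_contra hno
    push_neg at hno
    have hcent : IsCenteredColoring (RGraph (n / 2)) (fun w => φ (cpy j.1 j.2 w)) :=
      centered_comp _ (cpy_injective j.1 j.2) (fun a b => adj_cpy_iff j.2 a b) hφ
    have h1 := chiCen_le_card_image _ hcent
    have h2 : (Finset.image (fun w => φ (cpy j.1 j.2 w)) Finset.univ) ⊆ Kcᶜ := by
      intro col hcol
      obtain ⟨w, -, rfl⟩ := Finset.mem_image.1 hcol
      rw [Finset.mem_compl]
      intro hmem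
      rw [hKc] at hmem
      obtain ⟨l, -, hl⟩ := Finset.mem_image.1 hmem
      exact hno w l hl.symm
    have h3 : (Kcᶜ : Finset (Fin k)).card = k - (n + 1) := by
      rw [Finset.card_compl, hKcard, Fintype.card_fin]
    have h4 := h1.trans (Finset.card_le_card h2)
    rw [h3] at h4
    omega
  choose u σ hu using key
  -- pigeonhole: find a cycle of σ
  set g : ℕ → Fin (n + 1) := fun r => σ^[r] ⟨0, Nat.succ_pos n⟩ with hgdef
  obtain ⟨s, -, t, -, hst, hg⟩ :
      ∃ s ∈ Finset.range (n + 2), ∃ t ∈ Finset.range (n + 2), s ≠ t ∧ g s = g t := by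
    apply Finset.exists_ne_map_eq_of_card_lt_of_maps_to (t := Finset.univ)
    · simp
    · exact fun s _ => Finset.mem_univ _
  obtain ⟨s, t, hlt', hgst⟩ : ∃ s t, s < t ∧ g s = g t := by
    rcases lt_or_gt_of_ne hst with h | h
    exacts [⟨s, t, h, hg⟩, ⟨t, s, h, hg.symm⟩]
  set a := g s with ha
  set p := t - s with hpdef
  have hp : 0 < p := by omega
  have hpa : σ^[p] a = a := by
    have hts : p + s = t := by omega
    calc σ^[p] a = σ^[p + s] ⟨0, Nat.succ_pos n⟩ := (Function.iterate_add_apply σ p s _).symm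
    _ = g t := by rw [hts]
    _ = a := hgst.symm
  set C : Finset (Fin (n + 1)) := (Finset.range p).image (fun r => σ^[r] a) with hC
  have haC : a ∈ C := by
    rw [hC]
    exact Finset.mem_image.2 ⟨0, Finset.mem_range.2 hp, rfl⟩
  have hit : ∀ r : ℕ, σ^[r + 1] a = σ (σ^[r] a) := fun r => Function.iterate_succ_apply' σ r a
  have hCcl : ∀ l ∈ C, σ l ∈ C := by
    intro l hl
    rw [hC] at hl ⊢
    obtain ⟨r, hr, rfl⟩ := Finset.mem_image.1 hl
    rw [Finset.mem_range] at hr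
    rcases Nat.lt_or_ge (r + 1) p with h | h
    · exact Finset.mem_image.2 ⟨r + 1, Finset.mem_range.2 h, hit r⟩
    · have hr1 : r + 1 = p := by omega
      have h2 : σ (σ^[r] a) = a := by rw [← hit r, hr1]; exact hpa
      rw [h2]
      rw [hC] at haC
      exact haC
  have hCpre : ∀ l ∈ C, ∃ l' ∈ C, σ l' = l := by
    intro l hl
    rw [hC] at hl
    obtain ⟨r, hr, rfl⟩ := Finset.mem_image.1 hl
    rw [Finset.mem_range] at hr
    rcases Nat.eq_zero_or_pos r with rfl | hrpos
    · refine ⟨σ^[p - 1] a, ?_, ?_⟩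
      · rw [hC]; exact Finset.mem_image.2 ⟨p - 1, Finset.mem_range.2 (by omega), rfl⟩
      · have h1 : p - 1 + 1 = p := by omega
        have h2 : σ (σ^[p - 1] a) = a := by rw [← hit (p - 1), h1]; exact hpa
        rw [h2]
        rfl
    · refine ⟨σ^[r - 1] a, ?_, ?_⟩
      · rw [hC]; exact Finset.mem_image.2 ⟨r - 1, Finset.mem_range.2 (by omega), rfl⟩
      · have h1 : r - 1 + 1 = r := by omega
        rw [← hit (r - 1), h1]
  -- the bad set
  set S : Finset (RVset (n + 1)) :=
    C.image (fun l => vK l.1 l.2) ∪ C.image (fun l => cpy l.1 l.2 (u l)) with hSdef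
  have hvKS : ∀ l ∈ C, vK l.1 l.2 ∈ S := fun l hl =>
    Finset.mem_union_left _ (Finset.mem_image_of_mem _ hl)
  have hcpyS : ∀ l ∈ C, cpy l.1 l.2 (u l) ∈ S := fun l hl =>
    Finset.mem_union_right _ (Finset.mem_image_of_mem _ hl)
  have hane : vK a.1 a.2 ∈ S := hvKS a haC
  have hSne : S.Nonempty := ⟨_, hane⟩
  have haneS : (vK a.1 a.2 : RVset (n + 1)) ∈ (S : Set (RVset (n + 1))) := hane
  -- connectivity
  have hreachK : ∀ (l : Fin (n + 1)) (hl : l ∈ C) (x : RVset (n + 1)) (hx : x ∈ S)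
      (hxl : x = vK l.1 l.2),
      ((RGraph (n + 1)).induce (S : Set (RVset (n + 1)))).Reachable ⟨x, hx⟩ ⟨_, haneS⟩ := by
    intro l hl x hx hxl
    by_cases hla : l = a
    · subst hxl
      have : (⟨vK l.1 l.2, hx⟩ : ↥(S : Set (RVset (n + 1)))) = ⟨vK a.1 a.2, haneS⟩ :=
        Subtype.ext (congrArg (fun q : Fin (n + 1) => vK q.1 q.2) hla)
      rw [this]
    · have hne : l.1 ≠ a.1 := fun h => hla (Fin.ext h)
      have hadj := adj_clique l.2 a.2 hne
      subst hxl
      exact (induce_adj_of hx haneS hadj).reachable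
  have hSconn : ((RGraph (n + 1)).induce (S : Set (RVset (n + 1)))).Connected := by
    apply connected_of_reach _ _ (vK a.1 a.2) haneS
    intro x hx
    rcases Finset.mem_union.1 hx with hx' | hx'
    · obtain ⟨l, hl, hxl⟩ := Finset.mem_image.1 hx'
      exact hreachK l hl x hx hxl.symm
    · obtain ⟨l, hl, hxl⟩ := Finset.mem_image.1 hx'
      have hadj := (adj_clique_cpy l.2 (u l)).symm
      have h1 : ((RGraph (n + 1)).induce (S : Set (RVset (n + 1)))).Adj
          ⟨x, hx⟩ ⟨vK l.1 l.2, hvKS l hl⟩ := by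
        have : x = cpy l.1 l.2 (u l) := hxl.symm
        subst this
        exact induce_adj_of hx (hvKS l hl) hadj
      exact h1.reachable.trans (hreachK l hl _ (hvKS l hl) rfl)
  -- apply centeredness and derive a contradiction
  obtain ⟨w, hwS, hwcard⟩ := hφ S hSne hSconn
  have hpartner : ∃ y ∈ S, y ≠ w ∧ φ y = φ w := by
    rcases Finset.mem_union.1 hwS with hw' | hw'
    · obtain ⟨l, hl, hwl⟩ := Finset.mem_image.1 hw'
      obtain ⟨l', hl', hσl'⟩ := hCpre l hl
      refine ⟨cpy l'.1 l'.2 (u l'), hcpyS l' hl', ?_, ?_⟩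
      · intro h
        have hval := congrArg Subtype.val (h.trans hwl.symm)
        have : l'.1 :: (u l').1 = [l.1] := hval
        injection this with h1 h2
        exact rvset_ne_nil (u l').2 h2
      · rw [hu l', ← hwl]
        congr 1
        exact congrArg (fun q : Fin (n + 1) => vK q.1 q.2) hσl'
    · obtain ⟨l, hl, hwl⟩ := Finset.mem_image.1 hw'
      refine ⟨vK (σ l).1 (σ l).2, hvKS _ (hCcl l hl), ?_, ?_⟩
      · intro h
        have hval := congrArg Subtype.val (h.trans hwl.symm)
        have : [(σ l).1] = l.1 :: (u l).1 := hval
        injection this with h1 h2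
        exact rvset_ne_nil (u l).2 h2.symm
      · rw [← hwl, hu l]
  obtain ⟨y, hyS, hyne, hycol⟩ := hpartner
  have hsub : ({y, w} : Finset (RVset (n + 1))) ⊆ S.filter (fun x => φ x = φ w) := by
    intro z hz
    rcases Finset.mem_insert.1 hz with rfl | hz'
    · exact Finset.mem_filter.2 ⟨hyS, hycol⟩
    · rw [Finset.mem_singleton] at hz'
      subst hz'
      exact Finset.mem_filter.2 ⟨hwS, rfl⟩
  have h2 := Finset.card_le_card hsub
  rw [Finset.card_pair hyne, hwcard] at h2
  omega

/-- the centered coloring number of `R_i` satisfies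
`χ_cen(R_i) = i + χ_cen(R_{⌊(i-1)/2⌋})`. -/
theorem chiCen_rGraph (i : ℕ) :
    chiCen (RGraph i) = i + chiCen (RGraph ((i - 1) / 2)) := by

  cases i with
  | zero => simp
  | succ n =>
    have h : (n + 1 - 1) / 2 = n / 2 := by omega
    rw [h]
    exact le_antisymm (chiCen_upper n) (chiCen_lower n)
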